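/- arXiv:1310.2484 — 2 statements merged into one kernel-verified Lean document; each statement's English description precedes it below -/
import Mathlib

section
/- Let (w_l)_{l ≥ 0} be weights with w_l ≥ 1 and Σ_{l ≥ 0} w_l 2^{−l/2} < ∞, and let h = (h_{l,k} : l ≥ 0, 0 ≤ k < 2^l) be a double sequence of reals with ε := sup_{l ≥ 0} w_l^{-1} max_{0 ≤ k < 2^l} |h_{l,k}| < ∞. Then for every t ∈ [0,1] the double series Σ_{l ≥ 0} Σ_{0 ≤ k < 2^l} h_{l,k} ∫₀^t ψ_{l,k}(x) dx converges absolutely and satisfies | Σ_{l,k} h_{l,k} ∫₀^t ψ_{l,k} | ≤ ( Σ_{l ≥ 0} w_l 2^{−l/2 − 1} ) · ε. -/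
open MeasureTheory

/-- The Haar wavelet `ψ_{l,k}` on `[0,1]`. -/
noncomputable def haar (l k : ℕ) (x : ℝ) : ℝ :=
  if (k : ℝ) / 2 ^ l < x ∧ x ≤ ((k : ℝ) + 1 / 2) / 2 ^ l then (2 : ℝ) ^ ((l : ℝ) / 2)
  else if ((k : ℝ) + 1 / 2) / 2 ^ l < x ∧ x ≤ ((k : ℝ) + 1) / 2 ^ l then
    -((2 : ℝ) ^ ((l : ℝ) / 2))
  else 0

lemma haar_eq (l k : ℕ) (x : ℝ) : haar l k x =
    (Set.Ioc ((k:ℝ)/2^l) (((k:ℝ)+1/2)/2^l)).indicator (fun _ => (2:ℝ)^((l:ℝ)/2)) x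
    - (Set.Ioc (((k:ℝ)+1/2)/2^l) (((k:ℝ)+1)/2^l)).indicator (fun _ => (2:ℝ)^((l:ℝ)/2)) x := by
  unfold haar
  simp only [Set.indicator_apply, Set.mem_Ioc]
  split_ifs with h1 h2 h3 <;> first | linarith [h1.2, h2.1] | ring

lemma integral_indicator_Ioc (a b t c : ℝ) (ha : 0 ≤ a) (ht : 0 ≤ t) :
    ∫ x in (0:ℝ)..t, (Set.Ioc a b).indicator (fun _ => c) x
      = max (min t b - a) 0 * c := by
  rw [intervalIntegral.integral_of_le ht,
    MeasureTheory.setIntegral_indicator measurableSet_Ioc,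
    Set.Ioc_inter_Ioc, MeasureTheory.setIntegral_const, Real.volume_real_Ioc,
    smul_eq_mul, max_eq_right ha]

lemma II (a b c t : ℝ) :
    IntervalIntegrable ((Set.Ioc a b).indicator fun _ => c) volume 0 t := by
  rw [intervalIntegrable_iff]
  exact (MeasureTheory.Integrable.indicator
    ((integrableOn_const_iff).mpr (Or.inr (by rw [Set.uIoc]; exact measure_Ioc_lt_top)))
    measurableSet_Ioc)

lemma integral_haar (l k : ℕ) (t : ℝ) (ht : 0 ≤ t) :
    ∫ x in (0:ℝ)..t, haar l k x =
    (max (min t (((k:ℝ)+1/2)/2^l) - (k:ℝ)/2^l) 0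
     - max (min t (((k:ℝ)+1)/2^l) - ((k:ℝ)+1/2)/2^l) 0) * (2:ℝ)^((l:ℝ)/2) := by
  simp only [haar_eq]
  rw [intervalIntegral.integral_sub (II _ _ _ _) (II _ _ _ _),
    integral_indicator_Ioc _ _ _ _ (by positivity) ht,
    integral_indicator_Ioc _ _ _ _ (by positivity) ht, sub_mul]

lemma delta_mul (l : ℕ) : ((1:ℝ)/2)/2^l * (2:ℝ)^((l:ℝ)/2) = (2:ℝ)^(-(l:ℝ)/2 - 1) := by
  have h1 : ((1:ℝ)/2)/2^l = (2:ℝ)^(-(l:ℝ)-1) := by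
    rw [show (-(l:ℝ)-1) = -((l:ℝ)+1) by ring, Real.rpow_neg (by norm_num),
      Real.rpow_add (by norm_num), Real.rpow_natCast, Real.rpow_one]
    field_simp
  rw [h1, ← Real.rpow_add (by norm_num)]
  ring_nf

lemma abs_integral_haar_le (l k : ℕ) (t : ℝ) (ht : 0 ≤ t) :
    |∫ x in (0:ℝ)..t, haar l k x| ≤ (2:ℝ)^(-(l:ℝ)/2 - 1) := by
  rw [integral_haar l k t ht, abs_mul, abs_of_nonneg (Real.rpow_nonneg (by norm_num) _)]
  set a := (k:ℝ)/2^l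
  set m := ((k:ℝ)+1/2)/2^l
  set b := ((k:ℝ)+1)/2^l
  have hδ : (0:ℝ) ≤ ((1:ℝ)/2)/2^l := by positivity
  have hma : m - a = ((1:ℝ)/2)/2^l := by simp only [a, m]; ring
  have hbm : b - m = ((1:ℝ)/2)/2^l := by simp only [b, m]; ring
  have hX : max (min t m - a) 0 ≤ ((1:ℝ)/2)/2^l := by
    apply max_le _ hδ; rw [← hma]; gcongr; exact min_le_right _ _
  have hY : max (min t b - m) 0 ≤ ((1:ℝ)/2)/2^l := by
    apply max_le _ hδ; rw [← hbm]; gcongr; exact min_le_right _ _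
  have habs : |max (min t m - a) 0 - max (min t b - m) 0| ≤ ((1:ℝ)/2)/2^l := by
    rw [abs_le]
    constructor <;> [linarith [le_max_right (min t m - a) (0:ℝ)];
      linarith [le_max_right (min t b - m) (0:ℝ)]]
  calc |max (min t m - a) 0 - max (min t b - m) 0| * (2:ℝ)^((l:ℝ)/2)
      ≤ ((1:ℝ)/2)/2^l * (2:ℝ)^((l:ℝ)/2) := by
        apply mul_le_mul_of_nonneg_right habs (Real.rpow_nonneg (by norm_num) _)
    _ = (2:ℝ)^(-(l:ℝ)/2 - 1) := delta_mul l

lemma integral_haar_eq_zero (l k : ℕ) (t : ℝ) (ht : 0 ≤ t)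
    (H : t ≤ (k:ℝ)/2^l ∨ ((k:ℝ)+1)/2^l ≤ t) :
    ∫ x in (0:ℝ)..t, haar l k x = 0 := by
  rw [integral_haar l k t ht]
  have h2 : (0:ℝ) < 2^l := by positivity
  rcases H with H | H
  · have hm : t ≤ ((k:ℝ)+1/2)/2^l := le_trans H (by gcongr <;> linarith)
    have hb : t ≤ ((k:ℝ)+1)/2^l := le_trans H (by gcongr <;> linarith)
    rw [min_eq_left hm, min_eq_left hb,
      max_eq_right (by linarith : t - (k:ℝ)/2^l ≤ 0),
      max_eq_right (by linarith : t - ((k:ℝ)+1/2)/2^l ≤ 0)]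
    ring
  · have hm : ((k:ℝ)+1/2)/2^l ≤ t := le_trans (by gcongr <;> linarith) H
    rw [min_eq_right (le_trans (by gcongr <;> linarith) H), min_eq_right H]
    have e1 : (0:ℝ) ≤ ((k:ℝ)+1/2)/2^l - (k:ℝ)/2^l := by
      rw [div_sub_div_same, show ((k:ℝ)+1/2) - (k:ℝ) = 1/2 by ring]; positivity
    have e2 : (0:ℝ) ≤ ((k:ℝ)+1)/2^l - ((k:ℝ)+1/2)/2^l := by
      rw [div_sub_div_same, show ((k:ℝ)+1) - ((k:ℝ)+1/2) = 1/2 by ring]; positivity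
    rw [max_eq_left e1, max_eq_left e2]
    have : ((k:ℝ)+1/2)/2^l - (k:ℝ)/2^l - (((k:ℝ)+1)/2^l - ((k:ℝ)+1/2)/2^l) = 0 := by
      ring
    rw [this, zero_mul]

lemma nonzero_imp (l k : ℕ) (t : ℝ) (ht : 0 ≤ t)
    (hne : (∫ x in (0:ℝ)..t, haar l k x) ≠ 0) :
    (k:ℝ)/2^l < t ∧ t < ((k:ℝ)+1)/2^l := by
  by_contra hc
  apply hne
  apply integral_haar_eq_zero l k t ht
  rcases not_and_or.mp hc with hcl | hcl
  · exact Or.inl (not_lt.mp hcl)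
  · exact Or.inr (not_lt.mp hcl)

lemma level_sum (t : ℝ) (ht0 : 0 ≤ t) (h : ℕ → ℕ → ℝ) (ε wl : ℝ) (hεw : 0 ≤ ε * wl)
    (l : ℕ) (hε : ∀ k : ℕ, k < 2 ^ l → |h l k| ≤ ε * wl) :
    ∑ k : Fin (2^l), |h l (k:ℕ) * ∫ x in (0:ℝ)..t, haar l (k:ℕ) x|
      ≤ ε * wl * (2:ℝ)^(-(l:ℝ)/2-1) := by
  set f : Fin (2^l) → ℝ := fun k => |h l (k:ℕ) * ∫ x in (0:ℝ)..t, haar l (k:ℕ) x| with hf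
  have hbound : ∀ k : Fin (2^l), f k ≤ ε * wl * (2:ℝ)^(-(l:ℝ)/2-1) := by
    intro k
    rw [hf]
    simp only [abs_mul]
    exact mul_le_mul (hε k k.2) (abs_integral_haar_le l k t ht0) (abs_nonneg _) hεw
  have hpos : 0 ≤ ε * wl * (2:ℝ)^(-(l:ℝ)/2-1) :=
    mul_nonneg hεw (Real.rpow_nonneg (by norm_num) _)
  by_cases hex : ∃ k₀ : Fin (2^l), f k₀ ≠ 0
  · obtain ⟨k₀, hk₀⟩ := hex
    have huniq : ∀ k : Fin (2^l), k ≠ k₀ → f k = 0 := by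
      intro k hk
      by_contra hne
      have h1 : (∫ x in (0:ℝ)..t, haar l (k:ℕ) x) ≠ 0 := by
        intro hz; apply hne; rw [hf]; simp [hz]
      have h2 : (∫ x in (0:ℝ)..t, haar l (k₀:ℕ) x) ≠ 0 := by
        intro hz; apply hk₀; rw [hf]; simp [hz]
      obtain ⟨ha1, hb1⟩ := nonzero_imp l k t ht0 h1
      obtain ⟨ha2, hb2⟩ := nonzero_imp l k₀ t ht0 h2
      have h2l : (0:ℝ) < 2^l := by positivity
      have c1 : ((k:ℕ):ℝ) < ((k₀:ℕ):ℝ) + 1 :=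
        (div_lt_div_iff_of_pos_right h2l).mp (lt_trans ha1 hb2)
      have c2 : ((k₀:ℕ):ℝ) < ((k:ℕ):ℝ) + 1 :=
        (div_lt_div_iff_of_pos_right h2l).mp (lt_trans ha2 hb1)
      have d1 : (k:ℕ) < (k₀:ℕ) + 1 := by exact_mod_cast c1
      have d2 : (k₀:ℕ) < (k:ℕ) + 1 := by exact_mod_cast c2
      exact hk (Fin.ext (by omega))
    calc ∑ k : Fin (2^l), f k = f k₀ :=
          Finset.sum_eq_single_of_mem k₀ (Finset.mem_univ _) (fun b _ hb => huniq b hb)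
      _ ≤ _ := hbound k₀
  · push_neg at hex
    rw [Finset.sum_eq_zero (fun k _ => hex k)]
    exact hpos

/-- If `w l ≥ 1` with `Σ_l w_l 2^{−l/2} < ∞`, and the double sequence
`h` has multiscale norm at most `ε` (i.e. `|h l k| ≤ ε · w l` for all `l ≥ 0`, `k < 2^l`),
then for every `t ∈ [0,1]` the series `Σ_{l,k} h_{l,k} ∫₀^t ψ_{l,k}` converges absolutely
and `|Σ_{l,k} h_{l,k} ∫₀^t ψ_{l,k}| ≤ (Σ_l w_l 2^{−l/2−1}) · ε`. -/
theorem primitive_map_bounded_on_M0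
    (w : ℕ → ℝ) (hw : ∀ l, 1 ≤ w l)
    (hsum : Summable (fun l : ℕ => w l * (2 : ℝ) ^ (-(l : ℝ) / 2)))
    (h : ℕ → ℕ → ℝ) (ε : ℝ)
    (hε : ∀ l k : ℕ, k < 2 ^ l → |h l k| ≤ ε * w l)
    (t : ℝ) (ht : t ∈ Set.Icc (0 : ℝ) 1) :
    Summable (fun p : (l : ℕ) × Fin (2 ^ l) =>
        |h p.1 (p.2 : ℕ) * ∫ x in (0 : ℝ)..t, haar p.1 (p.2 : ℕ) x|) ∧
      |∑' p : (l : ℕ) × Fin (2 ^ l),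
          h p.1 (p.2 : ℕ) * ∫ x in (0 : ℝ)..t, haar p.1 (p.2 : ℕ) x| ≤
        (∑' l : ℕ, w l * (2 : ℝ) ^ (-(l : ℝ) / 2 - 1)) * ε := by
  have ht0 : 0 ≤ t := ht.1
  have hε0 : 0 ≤ ε := by
    have h00 := hε 0 0 (by norm_num)
    nlinarith [hw 0, abs_nonneg (h 0 0)]
  set F : ((l : ℕ) × Fin (2 ^ l)) → ℝ :=
    fun p => |h p.1 (p.2 : ℕ) * ∫ x in (0 : ℝ)..t, haar p.1 (p.2 : ℕ) x| with hF
  set g : ℕ → ℝ := fun l => ε * w l * (2:ℝ)^(-(l:ℝ)/2-1) with hg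
  have hg_sum : Summable g := by
    have : g = fun l => (w l * (2:ℝ)^(-(l:ℝ)/2)) * (ε/2) := by
      funext l
      rw [hg]
      simp only
      rw [Real.rpow_sub (by norm_num), Real.rpow_one]
      ring
    rw [this]
    exact hsum.mul_right _
  have hlev : ∀ l : ℕ, ∑' k : Fin (2^l), F ⟨l, k⟩ ≤ g l := by
    intro l
    rw [tsum_fintype]
    exact level_sum t ht0 h ε (w l) (mul_nonneg hε0 (le_trans zero_le_one (hw l))) l
      (fun k hk => hε l k hk)
  have hfib : ∀ l : ℕ, Summable (fun k : Fin (2^l) => F ⟨l, k⟩) := fun l => .of_finite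
  have hsum2 : Summable (fun l : ℕ => ∑' k : Fin (2^l), F ⟨l, k⟩) :=
    Summable.of_nonneg_of_le (fun l => tsum_nonneg (fun k => abs_nonneg _)) hlev hg_sum
  have hFsum : Summable F :=
    (summable_sigma_of_nonneg (fun p => abs_nonneg _)).mpr ⟨hfib, hsum2⟩
  refine ⟨hFsum, ?_⟩
  have hF'sum : Summable (fun p : (l : ℕ) × Fin (2 ^ l) =>
      h p.1 (p.2 : ℕ) * ∫ x in (0 : ℝ)..t, haar p.1 (p.2 : ℕ) x) := hFsum.of_abs
  have step1 : |∑' p : (l : ℕ) × Fin (2 ^ l),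
      h p.1 (p.2 : ℕ) * ∫ x in (0 : ℝ)..t, haar p.1 (p.2 : ℕ) x|
      ≤ ∑' p : (l : ℕ) × Fin (2 ^ l), F p := by
    rw [← Real.norm_eq_abs]
    refine (norm_tsum_le_tsum_norm ?_).trans_eq ?_
    · simp only [Real.norm_eq_abs]; exact hFsum
    · simp only [Real.norm_eq_abs, hF]
  calc |∑' p : (l : ℕ) × Fin (2 ^ l),
          h p.1 (p.2 : ℕ) * ∫ x in (0 : ℝ)..t, haar p.1 (p.2 : ℕ) x|
      ≤ ∑' p : (l : ℕ) × Fin (2 ^ l), F p := step1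
    _ = ∑' l : ℕ, ∑' k : Fin (2^l), F ⟨l, k⟩ := Summable.tsum_sigma hFsum
    _ ≤ ∑' l : ℕ, g l := Summable.tsum_le_tsum hlev hsum2 hg_sum
    _ = (∑' l : ℕ, w l * (2 : ℝ) ^ (-(l : ℝ) / 2 - 1)) * ε := by
        rw [← tsum_mul_right]
        congr 1
        funext l
        rw [hg]
        ring
end

section
/- Let D ≥ 1 and let X_1, …, X_n be i.i.d. random variables taking values in [0,1] whose common law has a density f with ‖f‖_∞ ≤ D. Then there exists a constant C depending only on D such that for all integers 1 ≤ J < j with 2^j · j ≤ n, E[ max over pairs (l,k) with J < l ≤ j and 0 ≤ k < 2^l of l^{−1/2} · | n^{−1/2} Σ_{i=1}^n ( ψ_{l,k}(X_i) − E[ψ_{l,k}(X_1)] ) | ] ≤ C. -/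
open MeasureTheory ProbabilityTheory

open scoped ENNReal NNReal

lemma haar_measurable (l k : ℕ) : Measurable (haar l k) := by
  unfold haar
  refine Measurable.ite ?_ measurable_const (Measurable.ite ?_ measurable_const measurable_const)
  · exact measurableSet_Ioc
  · exact measurableSet_Ioc

lemma haar_abs_le (l k : ℕ) (x : ℝ) : |haar l k x| ≤ 2 ^ ((l : ℝ) / 2) := by
  have h : (0:ℝ) ≤ 2 ^ ((l : ℝ) / 2) := by positivity
  unfold haar
  split_ifs
  · rw [abs_of_nonneg h]
  · rw [abs_neg, abs_of_nonneg h]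
  · simpa using h

lemma haar_rpow_sq (l : ℕ) : ((2:ℝ) ^ ((l : ℝ) / 2)) ^ 2 = (2:ℝ) ^ l := by
  rw [← Real.rpow_natCast ((2:ℝ) ^ ((l : ℝ) / 2)) 2, ← Real.rpow_mul (by norm_num)]
  norm_num

lemma haar_sq (l k : ℕ) (x : ℝ) :
    (haar l k x) ^ 2
      = Set.indicator (Set.Ioc ((k:ℝ)/2^l) (((k:ℝ)+1)/2^l)) (fun _ => (2:ℝ)^l) x := by
  have h2l : (0:ℝ) < 2 ^ l := by positivity
  have hmid1 : ((k:ℝ))/2^l ≤ ((k:ℝ)+1/2)/2^l := by gcongr; norm_num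
  have hmid2 : ((k:ℝ)+1/2)/2^l ≤ ((k:ℝ)+1)/2^l := by gcongr; norm_num
  unfold haar
  split_ifs with h1 h2
  · rw [Set.indicator_of_mem (Set.mem_Ioc.mpr ⟨h1.1, le_trans h1.2 hmid2⟩)]
    exact haar_rpow_sq l
  · rw [Set.indicator_of_mem (Set.mem_Ioc.mpr ⟨lt_of_le_of_lt hmid1 h2.1, h2.2⟩), neg_pow]
    simp [haar_rpow_sq l]
  · rw [Set.indicator_of_notMem]
    · simp
    · rintro ⟨ha, hb⟩
      rcases le_or_gt x (((k:ℝ)+1/2)/2^l) with h | h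
      · exact h1 ⟨ha, h⟩
      · exact h2 ⟨h, hb⟩

lemma integrable_haar_sq (l k : ℕ) :
    Integrable (fun x => (haar l k x) ^ 2) (volume : Measure ℝ) := by
  simp_rw [haar_sq]
  rw [integrable_indicator_iff measurableSet_Ioc]
  exact integrableOn_const (by rw [Real.volume_Ioc]; exact ENNReal.ofReal_ne_top)

lemma integral_haar_sq (l k : ℕ) : ∫ x, (haar l k x) ^ 2 = 1 := by
  have h2l : (0:ℝ) < 2 ^ l := by positivity
  simp_rw [haar_sq]
  rw [MeasureTheory.integral_indicator measurableSet_Ioc, setIntegral_const, measureReal_def, Real.volume_Ioc]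
  have : ((k:ℝ)+1)/2^l - (k:ℝ)/2^l = (2^l)⁻¹ := by field_simp; ring
  rw [this, ENNReal.toReal_ofReal (by positivity), smul_eq_mul, inv_mul_cancel₀ h2l.ne']

lemma integrable_of_abs_le {α : Type*} [MeasurableSpace α] {ν : Measure α} [IsFiniteMeasure ν]
    {h : α → ℝ} (hm : AEStronglyMeasurable h ν) {K : ℝ} (hb : ∀ x, |h x| ≤ K) :
    Integrable h ν :=
  Integrable.mono' (integrable_const K) hm
    (Filter.Eventually.of_forall fun x => by simpa [Real.norm_eq_abs] using hb x)

lemma exp_le_one_add_add_sq {y : ℝ} (h : |y| ≤ 1) : Real.exp y ≤ 1 + y + y ^ 2 := by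
  have h2 := Real.exp_bound h (by norm_num : 0 < 2)
  have h3 : ∑ m ∈ Finset.range 2, y ^ m / m.factorial = 1 + y := by
    simp [Finset.sum_range_succ]
  rw [h3] at h2
  have h4 := (abs_sub_le_iff.1 h2).1
  have h5 : |y| ^ 2 = y ^ 2 := sq_abs y
  rw [h5] at h4
  have h6 : ((Nat.succ 2 : ℕ) : ℝ) / ((Nat.factorial 2 : ℕ) * (2:ℕ)) = 3 / 4 := by
    norm_num [Nat.factorial]
  rw [h6] at h4
  nlinarith [sq_nonneg y]

lemma le_add_inv_exp {u t0 L : ℝ} (hL : 0 < L) :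
    u ≤ t0 + L⁻¹ * Real.exp (L * (u - t0)) := by
  have h := Real.add_one_le_exp (L * (u - t0))
  have h2 : L * (u - t0) ≤ Real.exp (L * (u - t0)) := by linarith
  have h3 := mul_le_mul_of_nonneg_left h2 (inv_pos.2 hL).le
  rw [← mul_assoc, inv_mul_cancel₀ hL.ne', one_mul] at h3
  linarith



lemma mgf_aux {ν : Measure ℝ} [IsProbabilityMeasure ν] {g : ℝ → ℝ} (hg : Measurable g)
    {B : ℝ} (hB : 0 ≤ B) (hgB : ∀ x, |g x| ≤ B) {t : ℝ} (ht : |t| * (2 * B) ≤ 1)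
    {V : ℝ} (hV0 : 0 ≤ V) (hV : ∫ x, (g x - ∫ y, g y ∂ν) ^ 2 ∂ν ≤ V) :
    ∫ x, Real.exp (t * (g x - ∫ y, g y ∂ν)) ∂ν ≤ Real.exp (t ^ 2 * V) := by
  set m := ∫ y, g y ∂ν with hm_def
  have hm : |m| ≤ B := by
    have := norm_integral_le_of_norm_le_const (μ := ν) (f := g) (C := B)
      (Filter.Eventually.of_forall fun x => by
        rw [Real.norm_eq_abs]; exact hgB x)
    simpa [Real.norm_eq_abs] using this
  have hsub : ∀ x, |g x - m| ≤ 2 * B := fun x => by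
    calc |g x - m| ≤ |g x| + |m| := abs_sub (g x) m
    _ ≤ B + B := add_le_add (hgB x) hm
    _ = 2 * B := by ring
  have hφ : ∀ x, |t * (g x - m)| ≤ 1 := fun x => by
    rw [abs_mul]
    calc |t| * |g x - m| ≤ |t| * (2 * B) :=
          mul_le_mul_of_nonneg_left (hsub x) (abs_nonneg t)
    _ ≤ 1 := ht
  have hgmeas : Measurable fun x => g x - m := hg.sub measurable_const
  have hgi : Integrable g ν := integrable_of_abs_le hg.aestronglyMeasurable hgB
  have hgsubi : Integrable (fun x => g x - m) ν :=
    integrable_of_abs_le hgmeas.aestronglyMeasurable hsub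
  have hsqi : Integrable (fun x => (g x - m) ^ 2) ν :=
    integrable_of_abs_le (hgmeas.pow_const 2).aestronglyMeasurable
      (K := (2 * B) ^ 2) fun x => by
        rw [abs_pow]
        exact pow_le_pow_left₀ (abs_nonneg _) (hsub x) 2
  have hexpi : Integrable (fun x => Real.exp (t * (g x - m))) ν :=
    integrable_of_abs_le ((hgmeas.const_mul t).exp).aestronglyMeasurable
      (K := Real.exp 1) fun x => by
        rw [abs_of_pos (Real.exp_pos _)]
        exact Real.exp_le_exp.2 (le_trans (le_abs_self _) (hφ x))
  have hpolyi : Integrable (fun x => 1 + t * (g x - m) + (t * (g x - m)) ^ 2) ν := by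
    refine Integrable.add (Integrable.add (integrable_const 1) (hgsubi.const_mul t)) ?_
    simp_rw [mul_pow]
    exact hsqi.const_mul _
  have key : ∫ x, Real.exp (t * (g x - m)) ∂ν
      ≤ ∫ x, (1 + t * (g x - m) + (t * (g x - m)) ^ 2) ∂ν :=
    integral_mono hexpi hpolyi fun x => exp_le_one_add_add_sq (hφ x)
  have hzero : ∫ x, (g x - m) ∂ν = 0 := by
    rw [integral_sub hgi (integrable_const m), integral_const]
    simp [hm_def]
  have hRHS : ∫ x, (1 + t * (g x - m) + (t * (g x - m)) ^ 2) ∂ν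
      = 1 + t ^ 2 * ∫ x, (g x - m) ^ 2 ∂ν := by
    simp_rw [mul_pow]
    have hi1 : Integrable (fun x => 1 + t * (g x - m)) ν :=
      (integrable_const 1).add (hgsubi.const_mul t)
    have hi2 : Integrable (fun x => t ^ 2 * (g x - m) ^ 2) ν := hsqi.const_mul _
    rw [integral_add hi1 hi2, integral_add (integrable_const 1) (hgsubi.const_mul t),
      integral_const, integral_const_mul, integral_const_mul, hzero]
    simp
  calc ∫ x, Real.exp (t * (g x - m)) ∂ν ≤ 1 + t ^ 2 * ∫ x, (g x - m) ^ 2 ∂ν := by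
        rw [← hRHS]; exact key
  _ ≤ 1 + t ^ 2 * V := by nlinarith [sq_nonneg t]
  _ ≤ Real.exp (t ^ 2 * V) := by
      have := Real.add_one_le_exp (t ^ 2 * V)
      linarith



lemma haar_var_le {D : ℝ} (hD : 1 ≤ D) {f : ℝ → ℝ} (hf : Measurable f)
    (hf0 : ∀ᵐ x ∂(volume : Measure ℝ), 0 ≤ f x)
    (hfD : ∀ᵐ x ∂(volume : Measure ℝ), f x ≤ D)
    (μ : Measure ℝ) (hμ : μ = volume.withDensity (fun x => ENNReal.ofReal (f x)))
    [IsProbabilityMeasure μ] (l k : ℕ) :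
    ∫ x, (haar l k x - ∫ y, haar l k y ∂μ) ^ 2 ∂μ ≤ D := by
  set B := (2:ℝ) ^ ((l : ℝ) / 2) with hB_def
  have hB : (0:ℝ) ≤ B := by positivity
  have hψi : Integrable (haar l k) μ :=
    integrable_of_abs_le (haar_measurable l k).aestronglyMeasurable (haar_abs_le l k)
  set m := ∫ y, haar l k y ∂μ with hm_def
  have hsqi : Integrable (fun x => (haar l k x) ^ 2) μ :=
    integrable_of_abs_le ((haar_measurable l k).pow_const 2).aestronglyMeasurable
      (K := B ^ 2) fun x => by
        rw [abs_pow]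
        exact pow_le_pow_left₀ (abs_nonneg _) (haar_abs_le l k x) 2
  have hstep2 : ∫ x, (haar l k x - m) ^ 2 ∂μ = (∫ x, (haar l k x) ^ 2 ∂μ) - m ^ 2 := by
    have hexp : (fun x => (haar l k x - m) ^ 2)
        = fun x => ((haar l k x) ^ 2 - (2 * m) * haar l k x) + m ^ 2 := by
      funext x; ring
    have hi : Integrable (fun x => (haar l k x) ^ 2 - (2 * m) * haar l k x) μ :=
      hsqi.sub (hψi.const_mul (2 * m))
    have hi2 : Integrable (fun x => (2 * m) * haar l k x) μ := hψi.const_mul (2 * m)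
    rw [hexp, integral_add hi (integrable_const _),
      integral_sub hsqi hi2, integral_const_mul, integral_const]
    simp only [probReal_univ, smul_eq_mul, one_mul, ← hm_def]
    ring
  have hstep3 : ∫ x, (haar l k x) ^ 2 ∂μ ≤ D := by
    have hrw : (fun x => ENNReal.ofReal (f x)) = (fun x : ℝ => ((f x).toNNReal : ℝ≥0∞)) := rfl
    rw [hμ, hrw, integral_withDensity_eq_integral_smul hf.real_toNNReal]
    have hle : ∫ x, (f x).toNNReal • (haar l k x) ^ 2 ∂(volume : Measure ℝ)
        ≤ ∫ x, D * (haar l k x) ^ 2 ∂(volume : Measure ℝ) := by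
      refine integral_mono_of_nonneg (Filter.Eventually.of_forall fun x => ?_)
        ((integrable_haar_sq l k).const_mul D) ?_
      · simp only [NNReal.smul_def, smul_eq_mul]
        positivity
      · filter_upwards [hf0, hfD] with x h0 h1
        simp only [NNReal.smul_def, smul_eq_mul]
        refine mul_le_mul_of_nonneg_right ?_ (sq_nonneg _)
        rw [Real.coe_toNNReal _ h0]
        exact h1
    calc ∫ x, (f x).toNNReal • (haar l k x) ^ 2 ∂(volume : Measure ℝ)
        ≤ ∫ x, D * (haar l k x) ^ 2 ∂(volume : Measure ℝ) := hle
    _ = D := by rw [integral_const_mul, integral_haar_sq]; ring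
  linarith [hstep2, hstep3, sq_nonneg m]

set_option maxHeartbeats 1000000 in
/-- Let `D ≥ 1` and let `X 0, …, X (n-1)` be i.i.d. on `[0,1]` with density
`f`, `‖f‖_∞ ≤ D`. There is a constant `C` (depending only on `D`) such that for all
`1 ≤ J < j` with `2^j · j ≤ n`,
`E[max_{J < l ≤ j, 0 ≤ k < 2^l} l^{−1/2} |n^{−1/2} Σ_{i<n} (ψ_{l,k}(X_i) − Eψ_{l,k}(X_0))|] ≤ C`. -/
theorem empirical_wavelet_block_max_expectation (D : ℝ) (hD : 1 ≤ D) :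
    ∃ C : ℝ,
      ∀ (Ω : Type) (_ : MeasurableSpace Ω) (P : Measure Ω), IsProbabilityMeasure P →
      ∀ (n : ℕ) (X : Fin n → Ω → ℝ) (f : ℝ → ℝ), Measurable f →
      (∀ᵐ x ∂(volume : Measure ℝ), 0 ≤ f x) →
      (∀ᵐ x ∂(volume : Measure ℝ), x ∉ Set.Icc (0 : ℝ) 1 → f x = 0) →
      (∀ᵐ x ∂(volume : Measure ℝ), f x ≤ D) →
      ∀ (μ : Measure ℝ), μ = volume.withDensity (fun x => ENNReal.ofReal (f x)) →
      (∀ i, Measurable (X i)) →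
      (∀ i, Measure.map (X i) P = μ) →
      iIndepFun X P →
      ∀ (J j : ℕ) (hJ : 1 ≤ J) (hJj : J < j), 2 ^ j * j ≤ n →
        ∫ ω, (Finset.Ioc J j).sup' (Finset.nonempty_Ioc.mpr hJj)
            (fun l => (Finset.range (2 ^ l)).sup'
              (Finset.nonempty_range_iff.mpr (by positivity))
              (fun k => (Real.sqrt l)⁻¹ *
                |(Real.sqrt n)⁻¹ * ∑ i, (haar l k (X i ω) - ∫ x, haar l k x ∂μ)|)) ∂P
          ≤ C := by
  refine ⟨(2 * Real.log 2 + D / 2 + 2) + 8, ?_⟩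
  intro Ω mΩ P hP n X f hf hf0 hfsupp hfD μ hμ hX hmap hindep J j hJ hJj hnj
  haveI := hP
  set t0 : ℝ := 2 * Real.log 2 + D / 2 + 2 with ht0_def
  have hlog2 : (0:ℝ) < Real.log 2 := Real.log_pos (by norm_num)
  have ht0pos : 0 < t0 := by rw [ht0_def]; linarith
  have hj2 : 2 ≤ j := by omega
  have hn0 : 0 < n := lt_of_lt_of_le (by positivity) hnj
  have hnR : (0:ℝ) < n := by exact_mod_cast hn0
  haveI hμprob : IsProbabilityMeasure μ := by
    rw [← hmap ⟨0, hn0⟩]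
    exact Measure.isProbabilityMeasure_map (hX _).aemeasurable
  -- notation
  set m : ℕ → ℕ → ℝ := fun l k => ∫ x, haar l k x ∂μ with hm_def
  set S : ℕ → ℕ → Ω → ℝ := fun l k ω => ∑ i, (haar l k (X i ω) - m l k) with hS_def
  set tl : ℕ → ℝ := fun l => Real.sqrt l / (2 * Real.sqrt n) with htl_def
  set G : ℕ → ℕ → Ω → ℝ := fun l k ω =>
    (2 / (l:ℝ)) * Real.exp (-((l:ℝ) / 2) * t0) *
      (Real.exp (tl l * S l k ω) + Real.exp (-(tl l) * S l k ω)) with hG_def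
  -- basic facts
  have hSmeas : ∀ l k, Measurable (S l k) := by
    intro l k
    exact Finset.measurable_sum _ fun i _ =>
      ((haar_measurable l k).comp (hX i)).sub measurable_const
  have hmB : ∀ l k, |m l k| ≤ 2 ^ ((l : ℝ) / 2) := by
    intro l k
    have := norm_integral_le_of_norm_le_const (μ := μ) (f := haar l k)
      (C := 2 ^ ((l : ℝ) / 2))
      (Filter.Eventually.of_forall fun x => by rw [Real.norm_eq_abs]; exact haar_abs_le l k x)
    simpa [Real.norm_eq_abs] using this
  have hSbound : ∀ l k ω, |S l k ω| ≤ n * (2 * 2 ^ ((l : ℝ) / 2)) := by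
    intro l k ω
    calc |S l k ω| ≤ ∑ i : Fin n, |haar l k (X i ω) - m l k| := by
          rw [hS_def]; exact Finset.abs_sum_le_sum_abs _ _
    _ ≤ ∑ _i : Fin n, (2 * 2 ^ ((l : ℝ) / 2)) := by
        refine Finset.sum_le_sum fun i _ => ?_
        calc |haar l k (X i ω) - m l k| ≤ |haar l k (X i ω)| + |m l k| := abs_sub _ _
        _ ≤ 2 ^ ((l : ℝ) / 2) + 2 ^ ((l : ℝ) / 2) := add_le_add (haar_abs_le l k _) (hmB l k)
        _ = 2 * 2 ^ ((l : ℝ) / 2) := by ring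
    _ = n * (2 * 2 ^ ((l : ℝ) / 2)) := by
        rw [Finset.sum_const, Finset.card_univ, Fintype.card_fin, nsmul_eq_mul]
  have hexpint : ∀ l k (s : ℝ), Integrable (fun ω => Real.exp (s * S l k ω)) P := by
    intro l k s
    refine integrable_of_abs_le (((hSmeas l k).const_mul s).exp).aestronglyMeasurable
      (K := Real.exp (|s| * (n * (2 * 2 ^ ((l : ℝ) / 2))))) fun ω => ?_
    rw [abs_of_pos (Real.exp_pos _)]
    refine Real.exp_le_exp.2 ?_
    calc s * S l k ω ≤ |s * S l k ω| := le_abs_self _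
    _ = |s| * |S l k ω| := abs_mul _ _
    _ ≤ |s| * (n * (2 * 2 ^ ((l : ℝ) / 2))) :=
        mul_le_mul_of_nonneg_left (hSbound l k ω) (abs_nonneg s)
  -- the mgf bound
  have hmgf : ∀ (l k : ℕ) (s : ℝ), |s| * (2 * 2 ^ ((l : ℝ) / 2)) ≤ 1 →
      ∫ ω, Real.exp (s * S l k ω) ∂P ≤ Real.exp ((n : ℝ) * (s ^ 2 * D)) := by
    intro l k s hs
    set Z : Fin n → Ω → ℝ := fun i => (fun x => haar l k x - m l k) ∘ X i with hZ_def
    have hZmeas : ∀ i, Measurable (Z i) := fun i =>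
      ((haar_measurable l k).sub measurable_const).comp (hX i)
    have hZindep : iIndepFun Z P :=
      hindep.comp _ fun i => (haar_measurable l k).sub measurable_const
    have hsum := hZindep.mgf_sum (t := s) hZmeas Finset.univ
    have hLHS : ∫ ω, Real.exp (s * S l k ω) ∂P = mgf (∑ i, Z i) P s := by
      simp only [mgf, Finset.sum_apply]
      rfl
    have hone : ∀ i : Fin n, mgf (Z i) P s ≤ Real.exp (s ^ 2 * D) := by
      intro i
      have hmap' : mgf (Z i) P s = ∫ x, Real.exp (s * (haar l k x - m l k)) ∂μ := by
        rw [mgf, ← hmap i, integral_map (f := fun x => Real.exp (s * (haar l k x - m l k))) (hX i).aemeasurable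
          ((((haar_measurable l k).sub measurable_const).const_mul s).exp).aestronglyMeasurable]
        rfl
      rw [hmap']
      exact mgf_aux (haar_measurable l k) (by positivity) (haar_abs_le l k) hs
        (by linarith) (haar_var_le hD hf hf0 hfD μ hμ l k)
    rw [hLHS, hsum]
    calc ∏ i : Fin n, mgf (Z i) P s ≤ ∏ _i : Fin n, Real.exp (s ^ 2 * D) :=
          Finset.prod_le_prod (fun i _ => mgf_nonneg) (fun i _ => hone i)
    _ = Real.exp (s ^ 2 * D) ^ n := by
        rw [Finset.prod_const, Finset.card_univ, Fintype.card_fin]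
    _ = Real.exp ((n : ℝ) * (s ^ 2 * D)) := (Real.exp_nat_mul _ n).symm
  -- facts about levels l ∈ Ioc J j
  have hlfacts : ∀ l ∈ Finset.Ioc J j, 2 ≤ l ∧ (0:ℝ) < l ∧ 0 ≤ tl l ∧
      tl l * (2 * 2 ^ ((l : ℝ) / 2)) ≤ 1 ∧ (tl l) ^ 2 = l / (4 * n) := by
    intro l hl
    rw [Finset.mem_Ioc] at hl
    have hl2 : 2 ≤ l := by omega
    have hlR : (0:ℝ) < l := by exact_mod_cast (by omega : 0 < l)
    have htl0 : 0 ≤ tl l := by rw [htl_def]; positivity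
    have hts : (tl l) ^ 2 = l / (4 * n) := by
      rw [htl_def]
      rw [div_pow, mul_pow, Real.sq_sqrt (le_of_lt hlR), Real.sq_sqrt (le_of_lt hnR)]
      ring
    have hln : (l : ℝ) * 2 ^ l ≤ n := by
      have h1 : l * 2 ^ l ≤ 2 ^ j * j := by
        calc l * 2 ^ l ≤ j * 2 ^ j :=
              Nat.mul_le_mul hl.2 (Nat.pow_le_pow_right (by norm_num) hl.2)
        _ = 2 ^ j * j := Nat.mul_comm _ _
      have h2 : l * 2 ^ l ≤ n := le_trans h1 hnj
      exact_mod_cast h2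
    have hcond : tl l * (2 * 2 ^ ((l : ℝ) / 2)) ≤ 1 := by
      have hA0 : 0 ≤ tl l * (2 * 2 ^ ((l : ℝ) / 2)) := by
        apply mul_nonneg htl0; positivity
      have hA2 : (tl l * (2 * 2 ^ ((l : ℝ) / 2))) ^ 2 ≤ 1 := by
        rw [mul_pow, mul_pow, haar_rpow_sq, hts]
        rw [div_mul_eq_mul_div, div_le_one (by positivity)]
        calc (l : ℝ) * (2 ^ 2 * 2 ^ l) = 4 * ((l:ℝ) * 2 ^ l) := by ring
        _ ≤ 4 * n := by linarith
      nlinarith [hA0, hA2, sq_nonneg (tl l * (2 * 2 ^ ((l : ℝ) / 2)) - 1)]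
    exact ⟨hl2, hlR, htl0, hcond, hts⟩
  -- pointwise bound
  have hptwise : ∀ ω, (Finset.Ioc J j).sup' (Finset.nonempty_Ioc.mpr hJj)
      (fun l => (Finset.range (2 ^ l)).sup'
        (Finset.nonempty_range_iff.mpr (by positivity))
        (fun k => (Real.sqrt l)⁻¹ *
          |(Real.sqrt n)⁻¹ * ∑ i, (haar l k (X i ω) - ∫ x, haar l k x ∂μ)|))
      ≤ t0 + ∑ l ∈ Finset.Ioc J j, ∑ k ∈ Finset.range (2 ^ l), G l k ω := by
    intro ω
    apply Finset.sup'_le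
    intro l hl
    apply Finset.sup'_le
    intro k hk
    obtain ⟨hl2, hlR, htl0, hcond, hts⟩ := hlfacts l hl
    have hGnn : ∀ l' k', l' ∈ Finset.Ioc J j → 0 ≤ G l' k' ω := by
      intro l' k' hl'
      rw [hG_def]
      have := (hlfacts l' hl').2.1
      positivity
    have hkey : (Real.sqrt l)⁻¹ *
        |(Real.sqrt n)⁻¹ * ∑ i, (haar l k (X i ω) - ∫ x, haar l k x ∂μ)|
        ≤ t0 + G l k ω := by
      have hSl : (∑ i, (haar l k (X i ω) - ∫ x, haar l k x ∂μ)) = S l k ω := rfl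
      rw [hSl]
      set u := (Real.sqrt l)⁻¹ * |(Real.sqrt n)⁻¹ * S l k ω| with hu_def
      have hL : (0:ℝ) < (l:ℝ) / 2 := by positivity
      have h1 := le_add_inv_exp (u := u) (t0 := t0) hL
      have hsqrtl : Real.sqrt l * Real.sqrt l = (l:ℝ) := Real.mul_self_sqrt (by positivity)
      have hsl0 : (0:ℝ) < Real.sqrt l := Real.sqrt_pos.2 hlR
      have hsn0 : (0:ℝ) < Real.sqrt n := Real.sqrt_pos.2 hnR
      have habs : |(Real.sqrt n)⁻¹ * S l k ω| = (Real.sqrt n)⁻¹ * |S l k ω| := by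
        rw [abs_mul, abs_of_nonneg (by positivity : (0:ℝ) ≤ (Real.sqrt n)⁻¹)]
      have h2 : ((l:ℝ)/2) * u = tl l * |S l k ω| := by
        rw [hu_def, habs, htl_def]
        field_simp
        linear_combination (-|S l k ω|) * hsqrtl
      have harg : ((l:ℝ) / 2) * (u - t0) = tl l * |S l k ω| + (-((l:ℝ)/2) * t0) := by
        rw [mul_sub, h2]; ring
      have hexpabs : Real.exp (tl l * |S l k ω|)
          ≤ Real.exp (tl l * S l k ω) + Real.exp (-(tl l) * S l k ω) := by
        rcases le_or_gt 0 (S l k ω) with h | h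
        · rw [abs_of_nonneg h]
          nlinarith [Real.exp_pos (-(tl l) * S l k ω)]
        · rw [abs_of_neg h]
          have : tl l * -S l k ω = -(tl l) * S l k ω := by ring
          rw [this]
          nlinarith [Real.exp_pos (tl l * S l k ω)]
      calc u ≤ t0 + ((l:ℝ)/2)⁻¹ * Real.exp (((l:ℝ)/2) * (u - t0)) := h1
      _ = t0 + (2/(l:ℝ)) * (Real.exp (tl l * |S l k ω|) * Real.exp (-((l:ℝ)/2) * t0)) := by
          rw [harg, Real.exp_add, inv_div]
      _ ≤ t0 + (2/(l:ℝ)) * ((Real.exp (tl l * S l k ω) + Real.exp (-(tl l) * S l k ω)) *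
            Real.exp (-((l:ℝ)/2) * t0)) := by
          have h2l : (0:ℝ) ≤ 2/(l:ℝ) := by positivity
          have := mul_le_mul_of_nonneg_right hexpabs (Real.exp_pos (-((l:ℝ)/2) * t0)).le
          nlinarith
      _ = t0 + G l k ω := by rw [hG_def]; ring
    refine le_trans hkey (add_le_add le_rfl ?_)
    calc G l k ω ≤ ∑ k' ∈ Finset.range (2 ^ l), G l k' ω :=
          Finset.single_le_sum (fun k' _ => hGnn l k' hl) hk
    _ ≤ ∑ l' ∈ Finset.Ioc J j, ∑ k' ∈ Finset.range (2 ^ l'), G l' k' ω :=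
        Finset.single_le_sum (f := fun l' => ∑ k' ∈ Finset.range (2 ^ l'), G l' k' ω)
          (fun l' hl' => Finset.sum_nonneg fun k' _ => hGnn l' k' hl') hl
  -- integrability of the majorant
  have hGint : ∀ l k, Integrable (G l k) P := by
    intro l k
    rw [hG_def]
    exact (((hexpint l k _).add (hexpint l k _)).const_mul _)
  have hmaj : Integrable (fun ω => t0 + ∑ l ∈ Finset.Ioc J j,
      ∑ k ∈ Finset.range (2 ^ l), G l k ω) P := by
    exact (integrable_const t0).add (integrable_finset_sum _ fun l _ =>
      integrable_finset_sum _ fun k _ => hGint l k)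
  -- main chain
  have hstep1 : ∫ ω, (Finset.Ioc J j).sup' (Finset.nonempty_Ioc.mpr hJj)
      (fun l => (Finset.range (2 ^ l)).sup'
        (Finset.nonempty_range_iff.mpr (by positivity))
        (fun k => (Real.sqrt l)⁻¹ *
          |(Real.sqrt n)⁻¹ * ∑ i, (haar l k (X i ω) - ∫ x, haar l k x ∂μ)|)) ∂P
      ≤ ∫ ω, (t0 + ∑ l ∈ Finset.Ioc J j, ∑ k ∈ Finset.range (2 ^ l), G l k ω) ∂P := by
    refine integral_mono_of_nonneg (Filter.Eventually.of_forall fun ω => ?_) hmaj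
      (Filter.Eventually.of_forall fun ω => hptwise ω)
    have h0 : (0:ℝ) ≤ (Real.sqrt j)⁻¹ *
        |(Real.sqrt n)⁻¹ * ∑ i, (haar j 0 (X i ω) - ∫ x, haar j 0 x ∂μ)| := by positivity
    refine le_trans h0 ?_
    refine le_trans (Finset.le_sup' (f := fun k => (Real.sqrt j)⁻¹ *
      |(Real.sqrt n)⁻¹ * ∑ i, (haar j k (X i ω) - ∫ x, haar j k x ∂μ)|)
      (Finset.mem_range.mpr (by positivity : 0 < 2 ^ j))) ?_
    exact Finset.le_sup' (f := fun l : ℕ => (Finset.range (2 ^ l)).sup'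
      (Finset.nonempty_range_iff.mpr (by positivity))
      (fun k => (Real.sqrt l)⁻¹ *
        |(Real.sqrt n)⁻¹ * ∑ i, (haar l k (X i ω) - ∫ x, haar l k x ∂μ)|))
      (Finset.mem_Ioc.mpr ⟨hJj, le_refl j⟩)
  have hstep2 : ∫ ω, (t0 + ∑ l ∈ Finset.Ioc J j, ∑ k ∈ Finset.range (2 ^ l), G l k ω) ∂P
      = t0 + ∑ l ∈ Finset.Ioc J j, ∑ k ∈ Finset.range (2 ^ l), (∫ ω, G l k ω ∂P) := by
    rw [integral_add (integrable_const t0) (integrable_finset_sum _ fun l _ =>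
      integrable_finset_sum _ fun k _ => hGint l k), integral_const]
    simp only [probReal_univ, smul_eq_mul, one_mul]
    rw [integral_finset_sum _ fun l _ => integrable_finset_sum _ fun k _ => hGint l k]
    congr 1
    refine Finset.sum_congr rfl fun l _ => ?_
    rw [integral_finset_sum _ fun k _ => hGint l k]
  have hstep3 : ∀ l ∈ Finset.Ioc J j, ∀ k ∈ Finset.range (2 ^ l),
      ∫ ω, G l k ω ∂P ≤ (2/(l:ℝ)) * Real.exp (-((l:ℝ)/2) * t0) * (2 * Real.exp ((l:ℝ) * D / 4)) := by
    intro l hl k _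
    obtain ⟨hl2, hlR, htl0, hcond, hts⟩ := hlfacts l hl
    have hc0 : (0:ℝ) ≤ (2/(l:ℝ)) * Real.exp (-((l:ℝ)/2) * t0) := by positivity
    have habs1 : |tl l| * (2 * 2 ^ ((l : ℝ) / 2)) ≤ 1 := by
      rw [abs_of_nonneg htl0]; exact hcond
    have habs2 : |(-(tl l))| * (2 * 2 ^ ((l : ℝ) / 2)) ≤ 1 := by
      rw [abs_neg, abs_of_nonneg htl0]; exact hcond
    have hexpval : (n : ℝ) * ((tl l) ^ 2 * D) = (l:ℝ) * D / 4 := by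
      rw [hts]; field_simp
    have h1 : ∫ ω, Real.exp (tl l * S l k ω) ∂P ≤ Real.exp ((l:ℝ) * D / 4) := by
      have := hmgf l k (tl l) habs1
      rwa [hexpval] at this
    have h2 : ∫ ω, Real.exp (-(tl l) * S l k ω) ∂P ≤ Real.exp ((l:ℝ) * D / 4) := by
      have h := hmgf l k (-(tl l)) habs2
      have hsq : (-(tl l)) ^ 2 = (tl l) ^ 2 := by ring
      rwa [hsq, hexpval] at h
    have hGval : ∫ ω, G l k ω ∂P = (2/(l:ℝ)) * Real.exp (-((l:ℝ)/2) * t0) *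
        ((∫ ω, Real.exp (tl l * S l k ω) ∂P) + ∫ ω, Real.exp (-(tl l) * S l k ω) ∂P) := by
      rw [hG_def]
      rw [integral_const_mul ((2/(l:ℝ)) * Real.exp (-((l:ℝ)/2) * t0))]
      rw [integral_add (hexpint l k _) (hexpint l k _)]
    rw [hGval]
    have hsum_le : (∫ ω, Real.exp (tl l * S l k ω) ∂P) + (∫ ω, Real.exp (-(tl l) * S l k ω) ∂P)
        ≤ 2 * Real.exp ((l:ℝ) * D / 4) := by linarith
    exact mul_le_mul_of_nonneg_left hsum_le hc0
  -- per level numeric bound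
  have hlevel : ∀ l ∈ Finset.Ioc J j,
      ∑ k ∈ Finset.range (2 ^ l), (∫ ω, G l k ω ∂P) ≤ 4 * (1/2:ℝ) ^ l := by
    intro l hl
    obtain ⟨hl2, hlR, htl0, hcond, hts⟩ := hlfacts l hl
    calc ∑ k ∈ Finset.range (2 ^ l), (∫ ω, G l k ω ∂P)
        ≤ ∑ _k ∈ Finset.range (2 ^ l),
            (2/(l:ℝ)) * Real.exp (-((l:ℝ)/2) * t0) * (2 * Real.exp ((l:ℝ) * D / 4)) :=
          Finset.sum_le_sum (fun k hk => hstep3 l hl k hk)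
    _ = (2:ℝ) ^ l * ((2/(l:ℝ)) * Real.exp (-((l:ℝ)/2) * t0) * (2 * Real.exp ((l:ℝ) * D / 4))) := by
        rw [Finset.sum_const, Finset.card_range, nsmul_eq_mul]
        norm_num
    _ = (4/(l:ℝ)) * ((2:ℝ) ^ l * (Real.exp (-((l:ℝ)/2) * t0) * Real.exp ((l:ℝ) * D / 4))) := by
        ring
    _ = (4/(l:ℝ)) * Real.exp (-(l:ℝ)) := by
        congr 1
        rw [show ((2:ℝ) ^ l) = Real.exp ((l:ℝ) * Real.log 2) by
          rw [Real.exp_nat_mul, Real.exp_log (by norm_num : (0:ℝ) < 2)]]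
        rw [← Real.exp_add, ← Real.exp_add]
        congr 1
        rw [ht0_def]
        ring
    _ ≤ 4 * (1/2:ℝ) ^ l := by
        have hfrac : (4/(l:ℝ)) ≤ 4 := by
          have hl1 : (1:ℝ) ≤ (l:ℝ) := by exact_mod_cast (by omega : 1 ≤ l)
          rw [div_le_iff₀ hlR]
          nlinarith
        have hexp : Real.exp (-(l:ℝ)) ≤ (1/2:ℝ) ^ l := by
          rw [show (-(l:ℝ)) = (l:ℝ) * (-1) by ring, Real.exp_nat_mul]
          refine pow_le_pow_left₀ (Real.exp_pos _).le ?_ l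
          rw [Real.exp_neg]
          rw [inv_le_comm₀ (Real.exp_pos 1) (by norm_num)]
          have := Real.add_one_le_exp 1
          linarith
        calc (4/(l:ℝ)) * Real.exp (-(l:ℝ)) ≤ 4 * Real.exp (-(l:ℝ)) :=
              mul_le_mul_of_nonneg_right hfrac (Real.exp_pos _).le
        _ ≤ 4 * (1/2:ℝ) ^ l := by nlinarith [Real.exp_pos (-(l:ℝ))]
  -- sum the geometric series
  have hgeom : ∑ l ∈ Finset.Ioc J j, (4:ℝ) * (1/2:ℝ) ^ l ≤ 8 := by
    have hsub : Finset.Ioc J j ⊆ Finset.range (j+1) := by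
      intro l hl
      rw [Finset.mem_Ioc] at hl
      rw [Finset.mem_range]
      omega
    calc ∑ l ∈ Finset.Ioc J j, (4:ℝ) * (1/2:ℝ) ^ l
        ≤ ∑ l ∈ Finset.range (j+1), (4:ℝ) * (1/2:ℝ) ^ l :=
          Finset.sum_le_sum_of_subset_of_nonneg hsub (fun l _ _ => by positivity)
    _ = 4 * ∑ l ∈ Finset.range (j+1), (1/2:ℝ) ^ l := by rw [Finset.mul_sum]
    _ ≤ 8 := by
        have := geom_sum_eq (by norm_num : (1/2:ℝ) ≠ 1) (j+1)
        rw [this]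
        have hp : (0:ℝ) ≤ (1/2:ℝ) ^ (j+1) := by positivity
        have hp2 : (1/2:ℝ) ^ (j+1) ≤ 1 := pow_le_one₀ (by norm_num) (by norm_num)
        rw [show ((1/2:ℝ) - 1) = -(1/2) by norm_num]
        rw [div_neg]
        nlinarith
  -- finish
  refine le_trans hstep1 ?_
  rw [hstep2]
  have hsum8 : ∑ l ∈ Finset.Ioc J j, ∑ k ∈ Finset.range (2 ^ l), (∫ ω, G l k ω ∂P) ≤ 8 := by
    calc ∑ l ∈ Finset.Ioc J j, ∑ k ∈ Finset.range (2 ^ l), (∫ ω, G l k ω ∂P)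
        ≤ ∑ l ∈ Finset.Ioc J j, (4:ℝ) * (1/2:ℝ) ^ l := Finset.sum_le_sum hlevel
    _ ≤ 8 := hgeom
  rw [ht0_def]
  linarith [hsum8]
end
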